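/- arXiv:2410.15459 — 2 statements merged into one kernel-verified Lean document; each statement's English description precedes it below -/
import Mathlib

section
/- Group-invariant Hahn–Banach separation in the predual: Let X be a Banach space, G a compact group of isometric isomorphisms acting on X, and A ⊆ X* a convex, G*-invariant set that is closed in the G-weak-star topology σ_G(X*, X). If f ∈ X* \ A is G-invariant, then there exists a G-invariant point x ∈ X_G with sup_{h ∈ A} h(x) < f(x). -/
/-- The `G`-weak-star topology `σ_G(X*, X)` on the dual of `X`: the topology of pointwise
convergence on the `G`-invariant points of `X`. -/
noncomputable def weakStarGTopology (X : Type*) [NormedAddCommGroup X] [NormedSpace ℝ X]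
    {G : Type*} [Group G] (ρ : G →* (X ≃ₗᵢ[ℝ] X)) : TopologicalSpace (X →L[ℝ] ℝ) :=
  ⨅ x : {x : X // ∀ g : G, ρ g x = x},
    TopologicalSpace.induced (fun f : X →L[ℝ] ℝ => f x.1) inferInstance

/-- Every continuous linear functional on a weak space `WeakBilin B` is of the form
`x ↦ B x y` for some `y`. -/
theorem weakBilin_dual_eval {E F : Type*} [AddCommGroup E] [Module ℝ E]
    [AddCommGroup F] [Module ℝ F] (B : E →ₗ[ℝ] F →ₗ[ℝ] ℝ) (φ : WeakBilin B →L[ℝ] ℝ) :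
    ∃ y : F, ∀ h : E, φ h = B h y := by
  have h0 : φ ⁻¹' Metric.ball (0 : ℝ) 1 ∈ nhds (0 : WeakBilin B) := by
    apply φ.continuous.continuousAt.preimage_mem_nhds
    simp [Metric.ball_mem_nhds]
  obtain ⟨U, hU, hUsub⟩ := (LinearMap.hasBasis_weakBilin B).mem_iff.1 h0
  obtain ⟨s, r, hr, rfl⟩ := (SeminormFamily.basisSets_iff _).1 hU
  -- the finite family of evaluation functionals
  let L : s → E →ₗ[ℝ] ℝ := fun y => B.flip y.1
  let K : E →ₗ[ℝ] ℝ :=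
    { toFun := fun h => φ h
      map_add' := fun a b => φ.map_add a b
      map_smul' := fun c a => φ.map_smul c a }
  have hker : (⨅ i, LinearMap.ker (L i)) ≤ LinearMap.ker K := by
    intro h hh
    simp only [Submodule.mem_iInf, LinearMap.mem_ker] at hh ⊢
    -- every multiple of h lies in the ball, so |φ (c • h)| < 1 for all c
    have key : ∀ c : ℝ, |c * φ h| < 1 := by
      intro c
      have hmem : (c • h : E) ∈ (s.sup (B.toSeminormFamily)).ball 0 r := by
        rw [Seminorm.mem_ball_zero]
        refine Seminorm.finset_sup_apply_lt hr fun i hi => ?_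
        have : B h i = 0 := hh ⟨i, hi⟩
        simp only [LinearMap.toSeminormFamily_apply, map_smul, LinearMap.smul_apply, this,
          smul_zero, norm_zero]
        exact hr
      have : φ ((c : ℝ) • (h : WeakBilin B)) ∈ Metric.ball (0 : ℝ) 1 := hUsub hmem
      have e : φ (c • h) = c * φ h := φ.map_smul c h
      simpa [e, Real.norm_eq_abs, abs_mul, mul_comm] using this
    by_contra hne
    have hne' : φ h ≠ 0 := hne
    have h2 : |(2 / φ h) * φ h| < 1 := key (2 / φ h)
    rw [div_mul_cancel₀ _ hne'] at h2
    norm_num at h2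
  have hspan : K ∈ Submodule.span ℝ (Set.range L) :=
    mem_span_of_iInf_ker_le_ker hker
  have hrange : Submodule.span ℝ (Set.range L) ≤ LinearMap.range B.flip := by
    rw [Submodule.span_le]
    rintro _ ⟨i, rfl⟩
    exact ⟨i.1, rfl⟩
  obtain ⟨y, hy⟩ := hrange hspan
  exact ⟨y, fun h => by rw [show φ h = K h from rfl, ← hy]; rfl⟩

/-- Group-invariant Hahn–Banach separation in the predual: if `A ⊆ X*` is convex,
`G*`-invariant and `σ_G(X*, X)`-closed, and `f ∈ X* \ A` is `G`-invariant, then there is a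
`G`-invariant point `x ∈ X_G` with `sup_{h ∈ A} h x < f x`. -/
theorem gInvariant_hahnBanach_separation_predual
    (X : Type*) [NormedAddCommGroup X] [NormedSpace ℝ X] [CompleteSpace X]
    (G : Type*) [Group G] [TopologicalSpace G] [IsTopologicalGroup G] [CompactSpace G]
    (ρ : G →* (X ≃ₗᵢ[ℝ] X)) (hρ : ∀ x : X, Continuous fun g : G => ρ g x)
    (A : Set (X →L[ℝ] ℝ)) (hAconv : Convex ℝ A)
    (hAinv : ∀ g : G, (fun h : X →L[ℝ] ℝ =>
      h.comp ((ρ g).toContinuousLinearEquiv : X →L[ℝ] X)) '' A = A)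
    (hAclosed : @IsClosed _ (weakStarGTopology X ρ) A)
    (f : X →L[ℝ] ℝ) (hfA : f ∉ A) (hfinv : ∀ g : G, ∀ x : X, f (ρ g x) = f x) :
    ∃ x : X, (∀ g : G, ρ g x = x) ∧ ∃ r : ℝ, (∀ h ∈ A, h x ≤ r) ∧ r < f x := by
  -- the submodule of `G`-invariant points
  set M : Submodule ℝ X :=
    { carrier := {x : X | ∀ g : G, ρ g x = x}
      add_mem' := fun {a b} ha hb g => by simp [map_add, ha g, hb g]
      zero_mem' := fun g => by simp
      smul_mem' := fun c {a} ha g => by simp [map_smul, ha g] } with hM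
  have memM : ∀ x : X, x ∈ M ↔ ∀ g : G, ρ g x = x := fun x => Iff.rfl
  -- the pairing between `X*` and `M`
  let B : (X →L[ℝ] ℝ) →ₗ[ℝ] (M →ₗ[ℝ] ℝ) :=
    { toFun := fun h => (h : X →ₗ[ℝ] ℝ).comp M.subtype
      map_add' := fun h₁ h₂ => by ext x; rfl
      map_smul' := fun c h => by ext x; rfl }
  -- the `G`-weak-star topology coincides with the weak topology of this pairing
  have htop : weakStarGTopology X ρ = (WeakBilin.instTopologicalSpace B :
      TopologicalSpace (X →L[ℝ] ℝ)) := by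
    have : (WeakBilin.instTopologicalSpace B : TopologicalSpace (X →L[ℝ] ℝ)) =
        ⨅ y : M, TopologicalSpace.induced (fun h : X →L[ℝ] ℝ => h y.1) inferInstance := by
      show TopologicalSpace.induced (fun (h : X →L[ℝ] ℝ) (y : M) => B h y)
        Pi.topologicalSpace = _
      rw [Pi.topologicalSpace, induced_iInf]
      exact iInf_congr fun y => by rw [induced_compose]; rfl
    rw [this, weakStarGTopology]
    exact le_antisymm (le_iInf fun y => iInf_le_of_le ⟨y.1, y.2⟩ le_rfl)
      (le_iInf fun x => iInf_le_of_le ⟨x.1, x.2⟩ le_rfl)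
  -- separate in the locally convex space `WeakBilin B`
  rw [htop] at hAclosed
  obtain ⟨φ, r, hφA, hφf⟩ :=
    geometric_hahn_banach_closed_point (E := WeakBilin B) (s := A) (x := f)
      (fun _ hx _ hy _ _ ha hb hab => hAconv hx hy ha hb hab) hAclosed hfA
  obtain ⟨y, hy⟩ := weakBilin_dual_eval B φ
  refine ⟨y.1, y.2, r, fun h hh => ?_, ?_⟩
  · have := hφA h hh
    rw [hy h] at this
    exact this.le
  · have := hφf
    rw [hy f] at this
    exact this
end

section
/- G-invariant norming functional: Let X be a Banach space and G a compact group of isometric isomorphisms acting on X. For every G-invariant point x_0 ∈ X_G there exists a G-invariant functional f_0 ∈ X*_G with ‖f_0‖ = ‖x_0‖ and f_0(x_0) = ‖x_0‖². -/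
open MeasureTheory

/-- `G`-invariant norming functional: for every `G`-invariant point `x₀` of a Banach space
`X` acted on by a compact group `G` of isometric isomorphisms, there is a `G`-invariant
continuous linear functional `f₀` with `‖f₀‖ = ‖x₀‖` and `f₀ x₀ = ‖x₀‖ ^ 2`. -/
theorem gInvariant_norming_functional
    (X : Type*) [NormedAddCommGroup X] [NormedSpace ℝ X] [CompleteSpace X]
    (G : Type*) [Group G] [TopologicalSpace G] [IsTopologicalGroup G] [CompactSpace G]
    (ρ : G →* (X ≃ₗᵢ[ℝ] X)) (hρ : ∀ x : X, Continuous fun g : G => ρ g x)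
    (x₀ : X) (hx₀ : ∀ g : G, ρ g x₀ = x₀) :
    ∃ f₀ : X →L[ℝ] ℝ, (∀ g : G, ∀ x : X, f₀ (ρ g x) = f₀ x) ∧
      ‖f₀‖ = ‖x₀‖ ∧ f₀ x₀ = ‖x₀‖ ^ 2 := by
  by_cases hx : x₀ = 0
  · refine ⟨0, by simp, by simp [hx], by simp [hx]⟩
  obtain ⟨f, hf1, hfx⟩ := exists_dual_vector ℝ x₀ (norm_ne_zero_iff.mpr hx)
  letI : MeasurableSpace G := borel G
  haveI : BorelSpace G := ⟨rfl⟩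
  set μ : Measure G :=
    Measure.haarMeasure ⟨⟨Set.univ, isCompact_univ⟩, by simp⟩ with hμ
  haveI : IsProbabilityMeasure μ := ⟨Measure.haarMeasure_self⟩
  have hint : ∀ x : X, Integrable (fun g : G => f (ρ g⁻¹ x)) μ := by
    intro x
    have hc : Continuous fun g : G => f (ρ g⁻¹ x) :=
      f.continuous.comp ((hρ x).comp continuous_inv)
    exact hc.integrable_of_hasCompactSupport (HasCompactSupport.of_compactSpace _)
  have hbound : ∀ x : X, ‖∫ g, f (ρ g⁻¹ x) ∂μ‖ ≤ ‖x‖ := by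
    intro x
    have := norm_integral_le_of_norm_le_const (μ := μ)
      (f := fun g : G => f (ρ g⁻¹ x)) (C := ‖x‖) ?_
    · simpa using this
    · filter_upwards with g
      calc ‖f (ρ g⁻¹ x)‖ ≤ ‖f‖ * ‖ρ g⁻¹ x‖ := f.le_opNorm _
        _ = ‖x‖ := by rw [hf1, (ρ g⁻¹).norm_map, one_mul]
  set F : X →L[ℝ] ℝ := LinearMap.mkContinuous
    { toFun := fun x => ∫ g, f (ρ g⁻¹ x) ∂μ
      map_add' := fun x y => by
        simp only [map_add]
        exact integral_add (hint x) (hint y)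
      map_smul' := fun c x => by
        simp only [_root_.map_smul, smul_eq_mul, RingHom.id_apply]
        exact integral_const_mul c _ } 1
    (fun x => by simpa using hbound x) with hF
  have hFapp : ∀ x, F x = ∫ g, f (ρ g⁻¹ x) ∂μ := fun x => rfl
  have hFinv : ∀ h : G, ∀ x : X, F (ρ h x) = F x := by
    intro h x
    have : ∀ g : G, f (ρ g⁻¹ (ρ h x)) = f (ρ (h⁻¹ * g)⁻¹ x) := by
      intro g
      rw [mul_inv_rev, inv_inv, map_mul]
      rfl
    rw [hFapp, hFapp]
    simp_rw [this]
    exact integral_mul_left_eq_self (fun g => f (ρ g⁻¹ x)) h⁻¹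
  have hFx₀ : F x₀ = ‖x₀‖ := by
    rw [hFapp]
    have : (fun g : G => f (ρ g⁻¹ x₀)) = fun _ : G => ‖x₀‖ :=
      funext fun g => by rw [hx₀]; exact_mod_cast hfx
    rw [this, integral_const]
    simp
  refine ⟨‖x₀‖ • F, ?_, ?_, ?_⟩
  · intro g x; simp [hFinv g x]
  · refine le_antisymm ?_ ?_
    · refine (F.opNorm_smul_le _).trans ?_
      have : ‖F‖ ≤ 1 := LinearMap.mkContinuous_norm_le _ zero_le_one _
      calc ‖(‖x₀‖ : ℝ)‖ * ‖F‖ ≤ ‖x₀‖ * 1 := by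
            rw [Real.norm_of_nonneg (norm_nonneg _)]
            exact mul_le_mul_of_nonneg_left this (norm_nonneg _)
        _ = ‖x₀‖ := mul_one _
    · have h0 : (0:ℝ) < ‖x₀‖ := norm_pos_iff.mpr hx
      have : ‖x₀‖ * ‖x₀‖ ≤ ‖(‖x₀‖ • F)‖ * ‖x₀‖ := by
        calc ‖x₀‖ * ‖x₀‖ = ‖(‖x₀‖ • F) x₀‖ := by
              simp [hFx₀, abs_of_nonneg (mul_nonneg (norm_nonneg _) (norm_nonneg _))]
          _ ≤ ‖(‖x₀‖ • F)‖ * ‖x₀‖ := (‖x₀‖ • F).le_opNorm x₀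
      exact le_of_mul_le_mul_right this h0
  · simp [hFx₀, sq]
end
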